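/- In the blocking G/G/1/1 model with S exponentially distributed with rate μ > 0, the average age satisfies Δᵇ = E[G²]/(2E[G]) + 1/μ = E[Y²]/(2E[Y]) + E[Y·e^{-μY}]/(1 − E[e^{-μY}]) + 1/μ. -/

import Mathlib

open MeasureTheory ProbabilityTheory Real

set_option maxHeartbeats 1000000

lemma expMeasure_Ici {r t : ℝ} (hr : 0 < r) (ht : 0 ≤ t) :
    expMeasure r (Set.Ici t) = ENNReal.ofReal (Real.exp (-(r * t))) := by
  have hprob : IsProbabilityMeasure (expMeasure r) := isProbabilityMeasure_expMeasure hr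
  have hsing : expMeasure r {t} = 0 := by
    rw [expMeasure, gammaMeasure, withDensity_apply _ (measurableSet_singleton t)]
    simp
  have hIic : expMeasure r (Set.Iic t) = ENNReal.ofReal (1 - Real.exp (-(r * t))) := by
    rw [← ofReal_cdf (expMeasure r) t]
    have : cdf (expMeasure r) t = (if 0 ≤ t then 1 - Real.exp (-(r * t)) else 0) :=
      cdf_expMeasure_eq hr t
    rw [this, if_pos ht]
  have hIio : expMeasure r (Set.Iio t) = ENNReal.ofReal (1 - Real.exp (-(r * t))) := by
    have h1 : Set.Iic t = Set.Iio t ∪ {t} := by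
      ext x; simp [le_iff_lt_or_eq]
    have h2 : expMeasure r (Set.Iio t ∪ {t}) = expMeasure r (Set.Iio t) := by
      refine le_antisymm ?_ (measure_mono Set.subset_union_left)
      calc expMeasure r (Set.Iio t ∪ {t}) ≤ expMeasure r (Set.Iio t) + expMeasure r {t} :=
            measure_union_le _ _
        _ = expMeasure r (Set.Iio t) := by rw [hsing, add_zero]
    rw [← hIic, h1, h2]
  have hcompl : Set.Ici t = (Set.Iio t)ᶜ := by simp
  rw [hcompl, measure_compl measurableSet_Iio (measure_ne_top _ _), hIio, measure_univ]
  have he1 : Real.exp (-(r * t)) ≤ 1 := by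
    rw [Real.exp_le_one_iff]; nlinarith
  have he0 : (0:ℝ) ≤ Real.exp (-(r * t)) := (Real.exp_pos _).le
  rw [← ENNReal.ofReal_one, ← ENNReal.ofReal_sub _ (by linarith)]
  ring_nf

lemma lintegral_prod_range {Ω : Type*} [MeasureSpace Ω] [IsProbabilityMeasure (ℙ : Measure Ω)]
    (Y : ℕ → Ω → ℝ) (hYmeas : ∀ i, Measurable (Y i))
    (hYindep : iIndepFun Y ℙ)
    (f : ℕ → ℝ → ENNReal) (hf : ∀ i, Measurable (f i)) (n : ℕ) :
    ∫⁻ ω, ∏ i ∈ Finset.range n, f i (Y i ω) ∂ℙ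
      = ∏ i ∈ Finset.range n, ∫⁻ ω, f i (Y i ω) ∂ℙ := by
  have hg : iIndepFun (fun i ω => f i (Y i ω)) ℙ :=
    hYindep.comp f hf
  induction n with
  | zero => simp
  | succ n ih =>
    simp only [Finset.prod_range_succ, ← ih]
    have hindep : IndepFun (∏ j ∈ Finset.range n, fun ω => f j (Y j ω))
        (fun ω => f n (Y n ω)) ℙ :=
      hg.indepFun_prod_range_succ (fun i => (hf i).comp (hYmeas i)) n
    have := lintegral_mul_eq_lintegral_mul_lintegral_of_indepFun
      (f := ∏ j ∈ Finset.range n, fun ω => f j (Y j ω)) (g := fun ω => f n (Y n ω))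
      (by
        have : (∏ j ∈ Finset.range n, fun ω => f j (Y j ω))
            = fun ω => ∏ j ∈ Finset.range n, f j (Y j ω) := by
          ext ω; simp
        rw [this]
        exact Finset.measurable_prod _ (fun j _ => (hf j).comp (hYmeas j))) ((hf n).comp (hYmeas n)) hindep
    simp only [Finset.prod_apply, Pi.mul_apply] at this ⊢
    rw [← this]

lemma lintegral_restrict_exp {Ω : Type*} [MeasureSpace Ω] [IsProbabilityMeasure (ℙ : Measure Ω)]
    (Y : ℕ → Ω → ℝ) (S : Ω → ℝ) (μr : ℝ) (hμ : 0 < μr)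
    (hYmeas : ∀ i, Measurable (Y i)) (hSmeas : Measurable S)
    (hYpos : ∀ i ω, 0 < Y i ω)
    (hSY : IndepFun S (fun ω i => Y i ω) ℙ)
    (hSexp : Measure.map S ℙ = expMeasure μr)
    (A : ℕ → Ω → ℝ) (hA : ∀ k ω, A k ω = ∑ j ∈ Finset.range k, Y j ω)
    (ψ : (ℕ → ℝ) → ENNReal) (hψ : Measurable ψ) (n : ℕ) :
    ∫⁻ ω in {ω | A n ω ≤ S ω}, ψ (fun i => Y i ω) ∂ℙ
      = ∫⁻ ω, ψ (fun i => Y i ω) * ENNReal.ofReal (Real.exp (-(μr * A n ω))) ∂ℙ := by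
  haveI : IsProbabilityMeasure (expMeasure μr) := isProbabilityMeasure_expMeasure hμ
  set Yv : Ω → (ℕ → ℝ) := fun ω i => Y i ω with hYv
  have hYvmeas : Measurable Yv := measurable_pi_lambda _ hYmeas
  set an : (ℕ → ℝ) → ℝ := fun y => ∑ j ∈ Finset.range n, y j with han
  have hanmeas : Measurable an := Finset.measurable_sum _ (fun j _ => measurable_pi_apply j)
  have hAn : ∀ ω, A n ω = an (Yv ω) := fun ω => hA n ω
  set P : Set (ℝ × (ℕ → ℝ)) := {p | an p.2 ≤ p.1} with hP
  have hPmeas : MeasurableSet P := measurableSet_le (hanmeas.comp measurable_snd) measurable_fst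
  set Φ : ℝ × (ℕ → ℝ) → ENNReal := fun p => ψ p.2 * P.indicator 1 p with hΦdef
  have hΦmeas : Measurable Φ :=
    (hψ.comp measurable_snd).mul (measurable_const.indicator hPmeas)
  have hpair : Measurable (fun ω => (S ω, Yv ω)) := hSmeas.prodMk hYvmeas
  set ν : Measure (ℕ → ℝ) := Measure.map Yv ℙ with hν
  have hmap : Measure.map (fun ω => (S ω, Yv ω)) ℙ = (expMeasure μr).prod ν := by
    rw [← hSexp]
    exact (indepFun_iff_map_prod_eq_prod_map_map hSmeas.aemeasurable hYvmeas.aemeasurable).1 hSY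
  have hDset : {ω | A n ω ≤ S ω} = (fun ω => (S ω, Yv ω)) ⁻¹' P := by
    ext ω; simp only [hP, Set.mem_setOf_eq, Set.mem_preimage, hAn ω]
  have hDmeas : MeasurableSet {ω | A n ω ≤ S ω} := by
    rw [hDset]; exact hpair hPmeas
  have step1 : ∫⁻ ω in {ω | A n ω ≤ S ω}, ψ (Yv ω) ∂ℙ = ∫⁻ ω, Φ (S ω, Yv ω) ∂ℙ := by
    rw [← lintegral_indicator hDmeas]
    apply lintegral_congr
    intro ω
    simp only [Set.indicator_apply, hΦdef, Set.mem_setOf_eq, hP, hAn ω]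
    by_cases h : an (Yv ω) ≤ S ω
    · simp [h]
    · simp [h]
  have step2 : ∫⁻ ω, Φ (S ω, Yv ω) ∂ℙ = ∫⁻ p, Φ p ∂((expMeasure μr).prod ν) := by
    rw [← hmap, lintegral_map hΦmeas hpair]
  have step3 : ∫⁻ p, Φ p ∂((expMeasure μr).prod ν)
      = ∫⁻ y, ψ y * expMeasure μr (Set.Ici (an y)) ∂ν := by
    rw [lintegral_prod_symm' _ hΦmeas]
    apply lintegral_congr
    intro y
    have : (fun s => Φ (s, y)) = (Set.Ici (an y)).indicator (fun _ => ψ y) := by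
      funext s
      by_cases h : an y ≤ s
      · simp [hΦdef, hP, Set.indicator_of_mem, h]
      · simp [hΦdef, hP, Set.indicator_of_notMem, h]
    rw [this, lintegral_indicator measurableSet_Ici, setLIntegral_const]
  have step4 : ∫⁻ y, ψ y * expMeasure μr (Set.Ici (an y)) ∂ν
      = ∫⁻ y, ψ y * ENNReal.ofReal (Real.exp (-(μr * an y))) ∂ν := by
    apply lintegral_congr_ae
    have hae : ∀ᵐ y ∂ν, 0 ≤ an y := by
      rw [hν]
      rw [ae_map_iff hYvmeas.aemeasurable (measurableSet_le measurable_const hanmeas)]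
      filter_upwards with ω
      rw [← hAn ω, hA n ω]
      exact Finset.sum_nonneg (fun j _ => (hYpos j ω).le)
    filter_upwards [hae] with y hy
    rw [expMeasure_Ici hμ hy]
  have step5 : ∫⁻ y, ψ y * ENNReal.ofReal (Real.exp (-(μr * an y))) ∂ν
      = ∫⁻ ω, ψ (Yv ω) * ENNReal.ofReal (Real.exp (-(μr * A n ω))) ∂ℙ := by
    rw [hν, lintegral_map (f := fun y => ψ y * ENNReal.ofReal (Real.exp (-(μr * an y)))) (hψ.mul (by
      apply Measurable.ennreal_ofReal
      exact (measurable_const.mul hanmeas).neg.exp)) hYvmeas]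
    apply lintegral_congr; intro ω; rw [hAn ω]
  rw [step1, step2, step3, step4, step5]

lemma tsum_ite_lt_geom (r : ENNReal) (i : ℕ) :
    ∑' j : ℕ, (if i < j then r ^ (j - 1) else 0) = r ^ i * (1 - r)⁻¹ := by
  have h : ∑' j : ℕ, (if i < j then r ^ (j - 1) else 0) = ∑' d : ℕ, r ^ i * r ^ d := by
    apply tsum_eq_tsum_of_ne_zero_bij (fun d => (d : ℕ) + (i + 1))
    · intro x y hxy
      simpa [Subtype.ext_iff] using hxy
    · intro j hj
      have hij : i < j := by
        by_contra h
        simp [h] at hj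
      refine ⟨⟨j - (i + 1), ?_⟩, by simp; omega⟩
      have h2 : r ^ i * r ^ (j - (i+1)) = (if i < j then r ^ (j - 1) else 0) := by
        rw [if_pos hij, ← pow_add, show i + (j - (i+1)) = j - 1 by omega]
      have : j ∈ Function.support (fun x : ℕ => if i < x then r ^ (x - 1) else 0) := hj
      rw [Function.mem_support] at this ⊢
      show r ^ i * r ^ (j - (i+1)) ≠ 0
      rw [h2]
      exact this
    · intro d
      rw [if_pos (by omega), show (d : ℕ) + (i + 1) - 1 = i + d by omega, pow_add]
  rw [h, ENNReal.tsum_mul_left, ENNReal.tsum_geometric]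

lemma ennreal_tsum_nat_mul_pow (r : ENNReal) :
    ∑' j : ℕ, (j : ENNReal) * r ^ (j - 1) = (1 - r)⁻¹ ^ 2 := by
  calc ∑' j : ℕ, (j : ENNReal) * r ^ (j - 1)
      = ∑' j : ℕ, ∑' i : ℕ, (if i < j then r ^ (j - 1) else 0) := by
        apply tsum_congr; intro j
        rw [tsum_eq_sum (s := Finset.range j)
          (fun i hi => if_neg (fun h => hi (Finset.mem_range.2 h)))]
        rw [Finset.sum_congr rfl (fun i hi => if_pos (Finset.mem_range.1 hi)),
          Finset.sum_const, Finset.card_range, nsmul_eq_mul]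
    _ = ∑' i : ℕ, ∑' j : ℕ, (if i < j then r ^ (j - 1) else 0) := ENNReal.tsum_comm
    _ = ∑' i : ℕ, r ^ i * (1 - r)⁻¹ := tsum_congr (fun i => tsum_ite_lt_geom r i)
    _ = (1 - r)⁻¹ ^ 2 := by rw [ENNReal.tsum_mul_right, ENNReal.tsum_geometric, sq]


/-- **Blocking G/M/1/1, exact age (Theorem 2).**
If the service time `S` is exponential with rate `μ > 0`, then the average age
`Δᵇ = E[G²]/(2E[G]) + 1/μ` equals
`E[Y²]/(2E[Y]) + E[Y e^{-μY}]/(1 - E[e^{-μY}]) + 1/μ`. -/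
theorem blocking_GM11_exact_age
    {Ω : Type*} [MeasureSpace Ω] [IsProbabilityMeasure (ℙ : Measure Ω)]
    (Y : ℕ → Ω → ℝ) (S : Ω → ℝ) (μr : ℝ) (hμ : 0 < μr)
    (hYmeas : ∀ i, Measurable (Y i))
    (hSmeas : Measurable S)
    (hYpos : ∀ i ω, 0 < Y i ω)
    (hSpos : ∀ ω, 0 < S ω)
    (hYid : ∀ i, IdentDistrib (Y i) (Y 0) ℙ ℙ)
    (hYindep : iIndepFun Y ℙ)
    (hSY : IndepFun S (fun ω i => Y i ω) ℙ)
    (hY1 : Integrable (Y 0) ℙ)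
    (hY2 : Integrable (fun ω => (Y 0 ω) ^ 2) ℙ)
    -- `S` is exponentially distributed with rate `μ`
    (hSexp : Measure.map S ℙ = expMeasure μr)
    (A : ℕ → Ω → ℝ) (hA : ∀ k ω, A k ω = ∑ j ∈ Finset.range k, Y j ω)
    (K : Ω → ℕ) (hK : ∀ ω, K ω = sInf {k | 1 ≤ k ∧ S ω < A k ω})
    (G : Ω → ℝ) (hG : ∀ ω, G ω = A (K ω) ω) :
    (∫ ω, (G ω) ^ 2 ∂ℙ) / (2 * ∫ ω, G ω ∂ℙ) + 1 / μr
      = (∫ ω, (Y 0 ω) ^ 2 ∂ℙ) / (2 * ∫ ω, Y 0 ω ∂ℙ)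
        + (∫ ω, Y 0 ω * Real.exp (-(μr * Y 0 ω)) ∂ℙ)
          / (1 - ∫ ω, Real.exp (-(μr * Y 0 ω)) ∂ℙ)
        + 1 / μr := by
  -- Abbreviations
  set q : ℝ := ∫ ω, Real.exp (-(μr * Y 0 ω)) ∂ℙ with hq_def
  set m : ℝ := ∫ ω, Y 0 ω * Real.exp (-(μr * Y 0 ω)) ∂ℙ with hm_def
  set a : ℝ := ∫ ω, Y 0 ω ∂ℙ with ha_def
  set b : ℝ := ∫ ω, (Y 0 ω) ^ 2 ∂ℙ with hb_def
  set D : ℕ → Set Ω := fun n => {ω | A n ω ≤ S ω} with hD_def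
  -- measurability
  have hAfun : ∀ n, A n = fun ω => ∑ j ∈ Finset.range n, Y j ω := fun n => funext (hA n)
  have hAmeas : ∀ n, Measurable (A n) := by
    intro n; rw [hAfun n]; exact Finset.measurable_sum _ (fun j _ => hYmeas j)
  have hDmeas : ∀ n, MeasurableSet (D n) := fun n => measurableSet_le (hAmeas n) hSmeas
  have hAnonneg : ∀ n ω, 0 ≤ A n ω := by
    intro n ω; rw [hA n ω]; exact Finset.sum_nonneg (fun j _ => (hYpos j ω).le)
  have hAmono : ∀ {j k : ℕ}, j ≤ k → ∀ ω, A j ω ≤ A k ω := by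
    intro j k hjk ω
    rw [hA j ω, hA k ω]
    exact Finset.sum_le_sum_of_subset_of_nonneg
      (Finset.range_subset_range.2 hjk) (fun i _ _ => (hYpos i ω).le)
  have hDmono : ∀ {j k : ℕ}, j ≤ k → D k ⊆ D j := by
    intro j k hjk ω hω
    exact le_trans (hAmono hjk ω) hω
  -- identical distribution transfer
  have hident : ∀ (g : ℝ → ENNReal), Measurable g → ∀ i,
      ∫⁻ ω, g (Y i ω) ∂ℙ = ∫⁻ ω, g (Y 0 ω) ∂ℙ := by
    intro g hg i
    rw [← lintegral_map hg (hYmeas i), ← lintegral_map hg (hYmeas 0), (hYid i).map_eq]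
  have hprodY : ∀ (f : ℕ → ℝ → ENNReal), (∀ i, Measurable (f i)) → ∀ n,
      ∫⁻ ω, ∏ i ∈ Finset.range n, f i (Y i ω) ∂ℙ
        = ∏ i ∈ Finset.range n, ∫⁻ ω, f i (Y 0 ω) ∂ℙ := by
    intro f hf n
    rw [lintegral_prod_range Y hYmeas hYindep f hf n]
    exact Finset.prod_congr rfl (fun i _ => hident (f i) (hf i) i)
  -- exp factorization
  have hexpfA : ∀ n ω, ENNReal.ofReal (Real.exp (-(μr * A n ω)))
      = ∏ i ∈ Finset.range n, ENNReal.ofReal (Real.exp (-(μr * Y i ω))) := by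
    intro n ω
    rw [← ENNReal.ofReal_prod_of_nonneg (fun i _ => (Real.exp_pos _).le), ← Real.exp_sum]
    congr 2
    rw [hA n ω, Finset.mul_sum]
    simp
  -- ENNReal constants
  set Qe : ENNReal := ∫⁻ ω, ENNReal.ofReal (Real.exp (-(μr * Y 0 ω))) ∂ℙ with hQe_def
  set Ae : ENNReal := ∫⁻ ω, ENNReal.ofReal (Y 0 ω) ∂ℙ with hAe_def
  set Me : ENNReal := ∫⁻ ω, ENNReal.ofReal (Y 0 ω)
    * ENNReal.ofReal (Real.exp (-(μr * Y 0 ω))) ∂ℙ with hMe_def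
  set Be : ENNReal := ∫⁻ ω, ENNReal.ofReal (Y 0 ω * Y 0 ω) ∂ℙ with hBe_def
  -- key integral evaluations
  have F0 : ∀ n, (ℙ : Measure Ω) (D n) = Qe ^ n := by
    intro n
    have h1 : (ℙ : Measure Ω) (D n)
        = ∫⁻ ω in D n, (fun _ : ℕ → ℝ => (1:ENNReal)) (fun i => Y i ω) ∂ℙ := by
      rw [← setLIntegral_one]
    rw [h1, lintegral_restrict_exp Y S μr hμ hYmeas hSmeas hYpos hSY hSexp A hA
      (fun _ => (1:ENNReal)) measurable_const n]
    calc ∫⁻ ω, (fun _ : ℕ → ℝ => (1:ENNReal)) (fun i => Y i ω)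
          * ENNReal.ofReal (Real.exp (-(μr * A n ω))) ∂ℙ
        = ∫⁻ ω, ∏ i ∈ Finset.range n,
            ENNReal.ofReal (Real.exp (-(μr * Y i ω))) ∂ℙ := by
          apply lintegral_congr; intro ω
          show (1:ENNReal) * ENNReal.ofReal (Real.exp (-(μr * A n ω))) = _
          rw [one_mul, hexpfA n ω]
      _ = ∏ i ∈ Finset.range n, ∫⁻ ω,
            ENNReal.ofReal (Real.exp (-(μr * Y 0 ω))) ∂ℙ :=
          hprodY (fun _ x => ENNReal.ofReal (Real.exp (-(μr * x))))
            (fun i => ((measurable_id.const_mul μr).neg.exp).ennreal_ofReal) n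
      _ = Qe ^ n := by rw [Finset.prod_const, Finset.card_range, hQe_def]
  have F1 : ∀ j, ∫⁻ ω in D j, ENNReal.ofReal (Y j ω) ∂ℙ = Ae * Qe ^ j := by
    intro j
    have base : ∫⁻ ω in D j, ENNReal.ofReal (Y j ω) ∂ℙ
        = ∫⁻ ω, ENNReal.ofReal (Y j ω) * ENNReal.ofReal (Real.exp (-(μr * A j ω))) ∂ℙ :=
      lintegral_restrict_exp Y S μr hμ hYmeas hSmeas hYpos hSY hSexp A hA
        (fun y => ENNReal.ofReal (y j)) ((measurable_pi_apply j).ennreal_ofReal) j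
    set f : ℕ → ℝ → ENNReal := fun i x =>
      if i = j then ENNReal.ofReal x else ENNReal.ofReal (Real.exp (-(μr * x))) with hf_def
    have hfmeas : ∀ i, Measurable (f i) := by
      intro i
      by_cases h : i = j
      · have : f i = fun x => ENNReal.ofReal x := by funext x; rw [hf_def]; simp [h]
        rw [this]; exact measurable_id.ennreal_ofReal
      · have : f i = fun x => ENNReal.ofReal (Real.exp (-(μr * x))) := by
          funext x; rw [hf_def]; simp [h]
        rw [this]; exact ((measurable_id.const_mul μr).neg.exp).ennreal_ofReal
    have hpt : ∀ ω, ENNReal.ofReal (Y j ω) * ENNReal.ofReal (Real.exp (-(μr * A j ω)))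
        = ∏ i ∈ Finset.range (j+1), f i (Y i ω) := by
      intro ω
      rw [Finset.prod_range_succ]
      have h1 : f j (Y j ω) = ENNReal.ofReal (Y j ω) := by rw [hf_def]; simp
      have h2 : ∏ i ∈ Finset.range j, f i (Y i ω)
          = ∏ i ∈ Finset.range j, ENNReal.ofReal (Real.exp (-(μr * Y i ω))) := by
        apply Finset.prod_congr rfl
        intro i hi
        rw [hf_def]
        simp only []
        rw [if_neg (Nat.ne_of_lt (Finset.mem_range.1 hi))]
      rw [h1, h2, hexpfA j ω, mul_comm]
    rw [base, lintegral_congr hpt, hprodY f hfmeas (j+1), Finset.prod_range_succ]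
    have h3 : ∫⁻ ω, f j (Y 0 ω) ∂ℙ = Ae := by
      rw [hAe_def]; apply lintegral_congr; intro ω; rw [hf_def]; simp
    have h4 : ∀ i ∈ Finset.range j, ∫⁻ ω, f i (Y 0 ω) ∂ℙ = Qe := by
      intro i hi
      rw [hQe_def]; apply lintegral_congr; intro ω; rw [hf_def]
      simp only []
      rw [if_neg (Nat.ne_of_lt (Finset.mem_range.1 hi))]
    rw [h3, Finset.prod_congr rfl h4, Finset.prod_const, Finset.card_range, mul_comm]
  have F2 : ∀ j k, j < k →
      ∫⁻ ω in D k, ENNReal.ofReal (Y j ω * Y k ω) ∂ℙ = Me * Ae * Qe ^ (k - 1) := by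
    intro j k hjk
    have base : ∫⁻ ω in D k, ENNReal.ofReal (Y j ω * Y k ω) ∂ℙ
        = ∫⁻ ω, ENNReal.ofReal (Y j ω * Y k ω)
            * ENNReal.ofReal (Real.exp (-(μr * A k ω))) ∂ℙ :=
      lintegral_restrict_exp Y S μr hμ hYmeas hSmeas hYpos hSY hSexp A hA
        (fun y => ENNReal.ofReal (y j * y k))
        (((measurable_pi_apply j).mul (measurable_pi_apply k)).ennreal_ofReal) k
    set f : ℕ → ℝ → ENNReal := fun i x =>
      if i = k then ENNReal.ofReal x
      else if i = j then ENNReal.ofReal x * ENNReal.ofReal (Real.exp (-(μr * x)))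
      else ENNReal.ofReal (Real.exp (-(μr * x))) with hf_def
    have hfmeas : ∀ i, Measurable (f i) := by
      intro i
      by_cases h1 : i = k
      · have : f i = fun x => ENNReal.ofReal x := by funext x; rw [hf_def]; simp [h1]
        rw [this]; exact measurable_id.ennreal_ofReal
      · by_cases h2 : i = j
        · have : f i = fun x => ENNReal.ofReal x
              * ENNReal.ofReal (Real.exp (-(μr * x))) := by
            funext x; rw [hf_def]; simp [h1, h2, Nat.ne_of_lt hjk]
          rw [this]
          exact measurable_id.ennreal_ofReal.mul
            ((measurable_id.const_mul μr).neg.exp).ennreal_ofReal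
        · have : f i = fun x => ENNReal.ofReal (Real.exp (-(μr * x))) := by
            funext x; rw [hf_def]; simp [h1, h2]
          rw [this]; exact ((measurable_id.const_mul μr).neg.exp).ennreal_ofReal
    have hjmem : j ∈ Finset.range k := Finset.mem_range.2 hjk
    have hpt : ∀ ω, ENNReal.ofReal (Y j ω * Y k ω)
          * ENNReal.ofReal (Real.exp (-(μr * A k ω)))
        = ∏ i ∈ Finset.range (k+1), f i (Y i ω) := by
      intro ω
      rw [Finset.prod_range_succ]
      have h1 : f k (Y k ω) = ENNReal.ofReal (Y k ω) := by rw [hf_def]; simp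
      have h2 : f j (Y j ω) = ENNReal.ofReal (Y j ω)
          * ENNReal.ofReal (Real.exp (-(μr * Y j ω))) := by
        rw [hf_def]; simp [Nat.ne_of_lt hjk]
      have h3 : ∏ i ∈ (Finset.range k).erase j, f i (Y i ω)
          = ∏ i ∈ (Finset.range k).erase j,
              ENNReal.ofReal (Real.exp (-(μr * Y i ω))) := by
        apply Finset.prod_congr rfl
        intro i hi
        have hij : i ≠ j := Finset.ne_of_mem_erase hi
        have hik : i ≠ k := Nat.ne_of_lt (Finset.mem_range.1 (Finset.mem_of_mem_erase hi))
        rw [hf_def]; simp only []; rw [if_neg hik, if_neg hij]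
      rw [← Finset.mul_prod_erase (Finset.range k) (fun i => f i (Y i ω)) hjmem,
        h1, h2, h3, hexpfA k ω,
        ← Finset.mul_prod_erase (Finset.range k)
          (fun i => ENNReal.ofReal (Real.exp (-(μr * Y i ω)))) hjmem,
        ENNReal.ofReal_mul (hYpos j ω).le]
      ring
    rw [base, lintegral_congr hpt, hprodY f hfmeas (k+1), Finset.prod_range_succ,
      ← Finset.mul_prod_erase (Finset.range k) (fun i => ∫⁻ ω, f i (Y 0 ω) ∂ℙ) hjmem]
    have h4 : ∫⁻ ω, f k (Y 0 ω) ∂ℙ = Ae := by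
      rw [hAe_def]; apply lintegral_congr; intro ω; rw [hf_def]; simp
    have h5 : ∫⁻ ω, f j (Y 0 ω) ∂ℙ = Me := by
      rw [hMe_def]; apply lintegral_congr; intro ω; rw [hf_def]
      simp [Nat.ne_of_lt hjk]
    have h6 : ∀ i ∈ (Finset.range k).erase j, ∫⁻ ω, f i (Y 0 ω) ∂ℙ = Qe := by
      intro i hi
      have hij : i ≠ j := Finset.ne_of_mem_erase hi
      have hik : i ≠ k := Nat.ne_of_lt (Finset.mem_range.1 (Finset.mem_of_mem_erase hi))
      rw [hQe_def]; apply lintegral_congr; intro ω; rw [hf_def]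
      simp only []
      rw [if_neg hik, if_neg hij]
    rw [h4, h5, Finset.prod_congr rfl h6, Finset.prod_const,
      Finset.card_erase_of_mem hjmem, Finset.card_range]
    ring
  have F3 : ∀ j, ∫⁻ ω in D j, ENNReal.ofReal (Y j ω * Y j ω) ∂ℙ = Be * Qe ^ j := by
    intro j
    have base : ∫⁻ ω in D j, ENNReal.ofReal (Y j ω * Y j ω) ∂ℙ
        = ∫⁻ ω, ENNReal.ofReal (Y j ω * Y j ω)
            * ENNReal.ofReal (Real.exp (-(μr * A j ω))) ∂ℙ :=
      lintegral_restrict_exp Y S μr hμ hYmeas hSmeas hYpos hSY hSexp A hA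
        (fun y => ENNReal.ofReal (y j * y j))
        (((measurable_pi_apply j).mul (measurable_pi_apply j)).ennreal_ofReal) j
    set f : ℕ → ℝ → ENNReal := fun i x =>
      if i = j then ENNReal.ofReal (x * x)
      else ENNReal.ofReal (Real.exp (-(μr * x))) with hf_def
    have hfmeas : ∀ i, Measurable (f i) := by
      intro i
      by_cases h : i = j
      · have : f i = fun x => ENNReal.ofReal (x * x) := by funext x; rw [hf_def]; simp [h]
        rw [this]; exact (measurable_id.mul measurable_id).ennreal_ofReal
      · have : f i = fun x => ENNReal.ofReal (Real.exp (-(μr * x))) := by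
          funext x; rw [hf_def]; simp [h]
        rw [this]; exact ((measurable_id.const_mul μr).neg.exp).ennreal_ofReal
    have hpt : ∀ ω, ENNReal.ofReal (Y j ω * Y j ω)
          * ENNReal.ofReal (Real.exp (-(μr * A j ω)))
        = ∏ i ∈ Finset.range (j+1), f i (Y i ω) := by
      intro ω
      rw [Finset.prod_range_succ]
      have h1 : f j (Y j ω) = ENNReal.ofReal (Y j ω * Y j ω) := by rw [hf_def]; simp
      have h2 : ∏ i ∈ Finset.range j, f i (Y i ω)
          = ∏ i ∈ Finset.range j, ENNReal.ofReal (Real.exp (-(μr * Y i ω))) := by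
        apply Finset.prod_congr rfl
        intro i hi
        rw [hf_def]
        simp only []
        rw [if_neg (Nat.ne_of_lt (Finset.mem_range.1 hi))]
      rw [h1, h2, hexpfA j ω, mul_comm]
    rw [base, lintegral_congr hpt, hprodY f hfmeas (j+1), Finset.prod_range_succ]
    have h3 : ∫⁻ ω, f j (Y 0 ω) ∂ℙ = Be := by
      rw [hBe_def]; apply lintegral_congr; intro ω; rw [hf_def]; simp
    have h4 : ∀ i ∈ Finset.range j, ∫⁻ ω, f i (Y 0 ω) ∂ℙ = Qe := by
      intro i hi
      rw [hQe_def]; apply lintegral_congr; intro ω; rw [hf_def]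
      simp only []
      rw [if_neg (Nat.ne_of_lt (Finset.mem_range.1 hi))]
    rw [h3, Finset.prod_congr rfl h4, Finset.prod_const, Finset.card_range, mul_comm]
  -- real-valued facts
  have hexp_le_one : ∀ ω, Real.exp (-(μr * Y 0 ω)) ≤ 1 := by
    intro ω
    rw [Real.exp_le_one_iff]
    have := mul_pos hμ (hYpos 0 ω); linarith
  have hexp_int : Integrable (fun ω => Real.exp (-(μr * Y 0 ω))) ℙ := by
    apply Integrable.mono' (integrable_const (1:ℝ))
      (((measurable_const.mul (hYmeas 0)).neg.exp).aestronglyMeasurable)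
    filter_upwards with ω
    rw [Real.norm_eq_abs, abs_of_pos (Real.exp_pos _)]
    exact hexp_le_one ω
  have hm_int : Integrable (fun ω => Y 0 ω * Real.exp (-(μr * Y 0 ω))) ℙ := by
    apply Integrable.mono' hY1 (((hYmeas 0).mul
      ((measurable_const.mul (hYmeas 0)).neg.exp)).aestronglyMeasurable)
    filter_upwards with ω
    show ‖Y 0 ω * Real.exp (-(μr * Y 0 ω))‖ ≤ Y 0 ω
    rw [Real.norm_eq_abs, abs_of_pos (mul_pos (hYpos 0 ω) (Real.exp_pos _))]
    calc Y 0 ω * Real.exp (-(μr * Y 0 ω)) ≤ Y 0 ω * 1 :=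
          mul_le_mul_of_nonneg_left (hexp_le_one ω) (hYpos 0 ω).le
      _ = Y 0 ω := mul_one _
  have ha_pos : 0 < a := by
    rw [ha_def]
    rw [integral_pos_iff_support_of_nonneg_ae (ae_of_all _ (fun ω => (hYpos 0 ω).le)) hY1]
    have : Function.support (Y 0) = Set.univ := by
      ext ω; simp [Function.mem_support, (hYpos 0 ω).ne']
    rw [this]
    simp
  have hq_nonneg : 0 ≤ q := by
    rw [hq_def]
    exact integral_nonneg (fun ω => (Real.exp_pos _).le)
  have hm_nonneg : 0 ≤ m :=
    integral_nonneg (fun ω => (mul_pos (hYpos 0 ω) (Real.exp_pos _)).le)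
  have hb_nonneg : 0 ≤ b := integral_nonneg (fun ω => sq_nonneg _)
  have h1q_pos : 0 < 1 - q := by
    have hint : Integrable (fun ω => 1 - Real.exp (-(μr * Y 0 ω))) ℙ :=
      (integrable_const 1).sub hexp_int
    have hnn : 0 ≤ᵐ[ℙ] (fun ω => 1 - Real.exp (-(μr * Y 0 ω))) :=
      ae_of_all _ (fun ω =>
        (by linarith [hexp_le_one ω] : (0:ℝ) ≤ 1 - Real.exp (-(μr * Y 0 ω))))
    have h1 : (1:ℝ) - q = ∫ ω, (1 - Real.exp (-(μr * Y 0 ω))) ∂ℙ := by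
      rw [integral_sub (integrable_const 1) hexp_int, integral_const]
      simp [hq_def]
    rw [h1]
    rw [integral_pos_iff_support_of_nonneg_ae hnn hint]
    have hsupp : Function.support (fun ω => 1 - Real.exp (-(μr * Y 0 ω))) = Set.univ := by
      ext ω
      have h2 : Real.exp (-(μr * Y 0 ω)) < 1 := by
        rw [Real.exp_lt_one_iff]
        have := mul_pos hμ (hYpos 0 ω); linarith
      simp [Function.mem_support]
      linarith
    rw [hsupp]
    simp
  -- identification of ENNReal constants
  have hQe : Qe = ENNReal.ofReal q := by
    rw [hq_def, ofReal_integral_eq_lintegral_ofReal hexp_int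
      (ae_of_all _ (fun ω => (Real.exp_pos _).le))]
  have hAe : Ae = ENNReal.ofReal a := by
    rw [ha_def, ofReal_integral_eq_lintegral_ofReal hY1
      (ae_of_all _ (fun ω => (hYpos 0 ω).le))]
  have hMe : Me = ENNReal.ofReal m := by
    rw [hm_def, ofReal_integral_eq_lintegral_ofReal hm_int
      (ae_of_all _ (fun ω => (mul_pos (hYpos 0 ω) (Real.exp_pos _)).le))]
    apply lintegral_congr
    intro ω
    rw [← ENNReal.ofReal_mul (hYpos 0 ω).le]
  have hBe : Be = ENNReal.ofReal b := by
    rw [hb_def, ofReal_integral_eq_lintegral_ofReal hY2 (ae_of_all _ (fun ω => sq_nonneg _))]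
    apply lintegral_congr
    intro ω
    rw [sq]
  have hQe_lt_one : Qe < 1 := by
    rw [hQe, ← ENNReal.ofReal_one]
    exact (ENNReal.ofReal_lt_ofReal_iff one_pos).2 (by linarith)
  have h1mQ : 1 - Qe = ENNReal.ofReal (1 - q) := by
    rw [hQe, ← ENNReal.ofReal_one, ← ENNReal.ofReal_sub _ hq_nonneg]
  -- the exceptional set
  set W : Set Ω := {ω | ∃ n, S ω < A n ω} with hW_def
  have hWae : ∀ᵐ ω ∂ℙ, ω ∈ W := by
    have hcompl : (ℙ : Measure Ω) Wᶜ = 0 := by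
      have hle : ∀ n, (ℙ : Measure Ω) Wᶜ ≤ Qe ^ n := by
        intro n
        rw [← F0 n]
        apply measure_mono
        intro ω hω
        have h1 : ¬ ∃ n, S ω < A n ω := hω
        push_neg at h1
        exact h1 n
      have htend := ENNReal.tendsto_pow_atTop_nhds_zero_of_lt_one hQe_lt_one
      have h0 := ge_of_tendsto' htend hle
      exact le_antisymm h0 zero_le
    rw [ae_iff]
    exact hcompl
  -- identification of K
  have hKiff : ∀ ω ∈ W, ∀ j, (j < K ω ↔ ω ∈ D j) := by
    intro ω hω j
    obtain ⟨n, hn⟩ := hω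
    have hTne : {k | 1 ≤ k ∧ S ω < A k ω}.Nonempty := by
      refine ⟨n, ?_, hn⟩
      by_contra h
      push_neg at h
      have hn0 : n = 0 := by omega
      rw [hn0, hA 0 ω] at hn
      simp at hn
      linarith [hSpos ω]
    have hKmem : K ω ∈ {k | 1 ≤ k ∧ S ω < A k ω} := by
      rw [hK ω]; exact Nat.sInf_mem hTne
    constructor
    · intro hj
      show A j ω ≤ S ω
      by_contra h
      push_neg at h
      have hj1 : 1 ≤ j := by
        by_contra h0
        push_neg at h0
        have hj0 : j = 0 := by omega
        rw [hj0, hA 0 ω] at h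
        simp at h
        linarith [hSpos ω]
      have hle : K ω ≤ j := by
        rw [hK ω]; exact Nat.sInf_le ⟨hj1, h⟩
      omega
    · intro hDj
      have hDj' : A j ω ≤ S ω := hDj
      by_contra h
      push_neg at h
      have h1 := hAmono h ω
      have h2 := hKmem.2
      linarith
  -- nonnegativity of G
  have hGnn : ∀ ω, 0 ≤ G ω := by
    intro ω; rw [hG ω]; exact hAnonneg _ ω
  -- pointwise sum representation
  have hGae : ∀ᵐ ω ∂ℙ, ENNReal.ofReal (G ω)
      = ∑' j, (D j).indicator (fun ω => ENNReal.ofReal (Y j ω)) ω := by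
    filter_upwards [hWae] with ω hω
    have hterm : ∀ j, (D j).indicator (fun ω => ENNReal.ofReal (Y j ω)) ω
        = if j < K ω then ENNReal.ofReal (Y j ω) else 0 := by
      intro j
      by_cases h : j < K ω
      · rw [if_pos h, Set.indicator_of_mem ((hKiff ω hω j).1 h)]
      · rw [if_neg h, Set.indicator_of_notMem (fun hD => h ((hKiff ω hω j).2 hD))]
    calc ENNReal.ofReal (G ω) = ∑ j ∈ Finset.range (K ω), ENNReal.ofReal (Y j ω) := by
          rw [hG ω, hA (K ω) ω]
          exact ENNReal.ofReal_sum_of_nonneg (fun j _ => (hYpos j ω).le)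
      _ = ∑' j, (if j < K ω then ENNReal.ofReal (Y j ω) else 0) := by
          rw [tsum_eq_sum (s := Finset.range (K ω))
            (fun j hj => if_neg (fun h => hj (Finset.mem_range.2 h)))]
          exact Finset.sum_congr rfl (fun j hj => (if_pos (Finset.mem_range.1 hj)).symm)
      _ = ∑' j, (D j).indicator (fun ω => ENNReal.ofReal (Y j ω)) ω :=
          (tsum_congr hterm).symm
  have hG2ae : ∀ᵐ ω ∂ℙ, ENNReal.ofReal (G ω ^ 2)
      = ∑' j, ∑' k, (D (max j k)).indicator
          (fun ω => ENNReal.ofReal (Y j ω * Y k ω)) ω := by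
    filter_upwards [hGae] with ω hω
    have hsq : ENNReal.ofReal (G ω ^ 2) = ENNReal.ofReal (G ω) * ENNReal.ofReal (G ω) := by
      rw [sq, ENNReal.ofReal_mul (hGnn ω)]
    rw [hsq, hω]
    calc (∑' j, (D j).indicator (fun ω => ENNReal.ofReal (Y j ω)) ω)
          * (∑' k, (D k).indicator (fun ω => ENNReal.ofReal (Y k ω)) ω)
        = ∑' j, ((D j).indicator (fun ω => ENNReal.ofReal (Y j ω)) ω
            * ∑' k, (D k).indicator (fun ω => ENNReal.ofReal (Y k ω)) ω) := by
          rw [ENNReal.tsum_mul_right]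
      _ = ∑' j, ∑' k, ((D j).indicator (fun ω => ENNReal.ofReal (Y j ω)) ω
            * (D k).indicator (fun ω => ENNReal.ofReal (Y k ω)) ω) := by
          exact tsum_congr (fun j => by rw [ENNReal.tsum_mul_left])
      _ = ∑' j, ∑' k, (D (max j k)).indicator
            (fun ω => ENNReal.ofReal (Y j ω * Y k ω)) ω := by
          apply tsum_congr; intro j; apply tsum_congr; intro k
          by_cases hj : ω ∈ D j
          · by_cases hk : ω ∈ D k
            · have hmax : ω ∈ D (max j k) := by
                rcases max_choice j k with h | h <;> rw [h]
                · exact hj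
                · exact hk
              rw [Set.indicator_of_mem hj, Set.indicator_of_mem hk,
                Set.indicator_of_mem hmax, ENNReal.ofReal_mul (hYpos j ω).le]
            · have hmax : ω ∉ D (max j k) := fun h => hk (hDmono (le_max_right j k) h)
              rw [Set.indicator_of_notMem hk, Set.indicator_of_notMem hmax, mul_zero]
          · have hmax : ω ∉ D (max j k) := fun h => hj (hDmono (le_max_left j k) h)
            rw [Set.indicator_of_notMem hj, Set.indicator_of_notMem hmax, zero_mul]
  -- strong measurability of G
  have hGsm : AEStronglyMeasurable G ℙ := by
    have hHmeas : Measurable (fun ω =>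
        (∑' j, (D j).indicator (fun ω => ENNReal.ofReal (Y j ω)) ω).toReal) :=
      (Measurable.ennreal_tsum
        (fun j => ((hYmeas j).ennreal_ofReal).indicator (hDmeas j))).ennreal_toReal
    apply hHmeas.stronglyMeasurable.aestronglyMeasurable.congr
    filter_upwards [hGae] with ω hω
    rw [← hω, ENNReal.toReal_ofReal (hGnn ω)]
  -- lintegral of G
  have hLG : ∫⁻ ω, ENNReal.ofReal (G ω) ∂ℙ = Ae * (1 - Qe)⁻¹ := by
    rw [lintegral_congr_ae hGae, lintegral_tsum
      (fun j => (((hYmeas j).ennreal_ofReal).indicator (hDmeas j)).aemeasurable)]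
    calc ∑' j, ∫⁻ ω, (D j).indicator (fun ω => ENNReal.ofReal (Y j ω)) ω ∂ℙ
        = ∑' j, Ae * Qe ^ j :=
          tsum_congr (fun j => by rw [lintegral_indicator (hDmeas j)]; exact F1 j)
      _ = Ae * (1 - Qe)⁻¹ := by rw [ENNReal.tsum_mul_left, ENNReal.tsum_geometric]
  have hLG2 : ∫⁻ ω, ENNReal.ofReal (G ω ^ 2) ∂ℙ
      = Be * (1 - Qe)⁻¹ + 2 * (Me * Ae) * ((1 - Qe)⁻¹) ^ 2 := by
    rw [lintegral_congr_ae hG2ae, lintegral_tsum (f := fun j ω => ∑' k, (D (max j k)).indicator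
      (fun ω => ENNReal.ofReal (Y j ω * Y k ω)) ω) (fun j => Measurable.aemeasurable
      (Measurable.ennreal_tsum (fun k =>
        (((hYmeas j).mul (hYmeas k)).ennreal_ofReal).indicator (hDmeas (max j k)))))]
    have hjk : ∀ j k, ∫⁻ ω, (D (max j k)).indicator
          (fun ω => ENNReal.ofReal (Y j ω * Y k ω)) ω ∂ℙ
        = if j = k then Be * Qe ^ j else Me * Ae * Qe ^ (max j k - 1) := by
      intro j k
      rw [lintegral_indicator (hDmeas (max j k))]
      rcases lt_trichotomy j k with h | h | h
      · rw [if_neg (Nat.ne_of_lt h), max_eq_right h.le]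
        exact F2 j k h
      · subst h
        rw [if_pos rfl, max_self]
        exact F3 j
      · rw [if_neg (Nat.ne_of_gt h), max_eq_left h.le]
        have hcomm : ∫⁻ ω in D j, ENNReal.ofReal (Y j ω * Y k ω) ∂ℙ
            = ∫⁻ ω in D j, ENNReal.ofReal (Y k ω * Y j ω) ∂ℙ :=
          lintegral_congr (fun ω => by rw [mul_comm])
        rw [hcomm]
        exact F2 k j h
    have hstep : ∀ j, ∫⁻ ω, ∑' k, (D (max j k)).indicator
          (fun ω => ENNReal.ofReal (Y j ω * Y k ω)) ω ∂ℙ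
        = ∑' k : ℕ, (if j = k then Be * Qe ^ j else Me * Ae * Qe ^ (max j k - 1)) := by
      intro j
      rw [lintegral_tsum (f := fun k ω => (D (max j k)).indicator
        (fun ω => ENNReal.ofReal (Y j ω * Y k ω)) ω) (fun k => Measurable.aemeasurable
        ((((hYmeas j).mul (hYmeas k)).ennreal_ofReal).indicator (hDmeas (max j k))))]
      exact tsum_congr (fun k => hjk j k)
    rw [tsum_congr hstep]
    have hinner : ∀ j, (∑' k : ℕ, (if j = k then Be * Qe ^ j
          else Me * Ae * Qe ^ (max j k - 1)))
        = Be * Qe ^ j + (j : ENNReal) * (Me * Ae * Qe ^ (j - 1))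
          + Me * Ae * (Qe ^ j * (1 - Qe)⁻¹) := by
      intro j
      have hsplit : ∀ k : ℕ, (if j = k then Be * Qe ^ j else Me * Ae * Qe ^ (max j k - 1))
          = (if k = j then Be * Qe ^ j else 0)
            + (if k < j then Me * Ae * Qe ^ (j - 1) else 0)
            + (if j < k then Me * Ae * Qe ^ (k - 1) else 0) := by
        intro k
        rcases lt_trichotomy k j with h | h | h
        · rw [if_neg (by omega), if_neg (by omega), if_pos h, if_neg (by omega),
            max_eq_left h.le, zero_add, add_zero]
        · subst h
          simp
        · rw [if_neg (by omega), if_neg (by omega), if_neg (by omega), if_pos h,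
            max_eq_right h.le, zero_add, zero_add]
      rw [tsum_congr hsplit, ENNReal.tsum_add, ENNReal.tsum_add]
      congr 1
      congr 1
      · exact tsum_ite_eq j (fun _ => Be * Qe ^ j)
      · rw [tsum_eq_sum (s := Finset.range j)
          (fun k hk => if_neg (fun h => hk (Finset.mem_range.2 h)))]
        rw [Finset.sum_congr rfl (fun k hk => if_pos (Finset.mem_range.1 hk)),
          Finset.sum_const, Finset.card_range, nsmul_eq_mul]
      · have hc : ∀ k, (if j < k then Me * Ae * Qe ^ (k - 1) else 0)
            = Me * Ae * (if j < k then Qe ^ (k - 1) else 0) := by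
          intro k
          split_ifs with h
          · rfl
          · rw [mul_zero]
        rw [tsum_congr hc, ENNReal.tsum_mul_left, tsum_ite_lt_geom]
    rw [tsum_congr hinner, ENNReal.tsum_add, ENNReal.tsum_add]
    have t1 : ∑' j, Be * Qe ^ j = Be * (1 - Qe)⁻¹ := by
      rw [ENNReal.tsum_mul_left, ENNReal.tsum_geometric]
    have t2 : ∑' j : ℕ, (j : ENNReal) * (Me * Ae * Qe ^ (j - 1))
        = Me * Ae * ((1 - Qe)⁻¹) ^ 2 := by
      have hcomm : ∀ j : ℕ, (j : ENNReal) * (Me * Ae * Qe ^ (j - 1))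
          = Me * Ae * ((j : ENNReal) * Qe ^ (j - 1)) := fun j => by ring
      rw [tsum_congr hcomm, ENNReal.tsum_mul_left, ennreal_tsum_nat_mul_pow]
    have t3 : ∑' j, Me * Ae * (Qe ^ j * (1 - Qe)⁻¹)
        = Me * Ae * ((1 - Qe)⁻¹ * (1 - Qe)⁻¹) := by
      rw [ENNReal.tsum_mul_left]
      congr 1
      rw [ENNReal.tsum_mul_right, ENNReal.tsum_geometric]
    rw [t1, t2, t3]
    ring
  -- real integrals
  have hEG : ∫ ω, G ω ∂ℙ = a * (1 - q)⁻¹ := by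
    rw [integral_eq_lintegral_of_nonneg_ae (ae_of_all _ hGnn) hGsm, hLG, hAe, h1mQ,
      ← ENNReal.ofReal_inv_of_pos h1q_pos, ← ENNReal.ofReal_mul ha_pos.le,
      ENNReal.toReal_ofReal (by positivity)]
  have hEG2 : ∫ ω, (G ω) ^ 2 ∂ℙ = b * (1 - q)⁻¹ + 2 * (m * a) * ((1 - q)⁻¹) ^ 2 := by
    rw [integral_eq_lintegral_of_nonneg_ae (ae_of_all _ (fun ω => sq_nonneg (G ω)))
      (hGsm.pow 2), hLG2, hBe, hMe, hAe, h1mQ,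
      ← ENNReal.ofReal_inv_of_pos h1q_pos,
      ← ENNReal.ofReal_mul hb_nonneg,
      ← ENNReal.ofReal_mul hm_nonneg,
      ← ENNReal.ofReal_pow (by positivity),
      ← ENNReal.ofReal_ofNat,
      ← ENNReal.ofReal_mul (by norm_num),
      ← ENNReal.ofReal_mul (by positivity),
      ← ENNReal.ofReal_add (by positivity) (by positivity),
      ENNReal.toReal_ofReal (by positivity)]
  -- final algebra
  rw [hEG, hEG2]
  have h1q_ne : (1 : ℝ) - q ≠ 0 := h1q_pos.ne'
  have ha_ne : a ≠ 0 := ha_pos.ne'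
  field_simp
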